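/- Let (D, 𝔄, μ) be a measure space and Σ_T, Σ_S, ψ, φ : D → ℝ measurable functions with Σ_T > 0 μ-a.e., Σ_S ≥ 0 μ-a.e., and Σ_S ≤ λ·Σ_T μ-a.e. for a constant λ ≥ 0. Assume Σ_T·ψ² and Σ_T·φ² are μ-integrable and that Σ_S·φ·ψ is μ-integrable. If ∫_D Σ_T ψ² dμ ≤ ∫_D Σ_S φ ψ dμ, then ‖√Σ_T · ψ‖_{L²(μ)} ≤ λ · ‖√Σ_T · φ‖_{L²(μ)} (equivalently, ∫_D Σ_T ψ² dμ ≤ λ² ∫_D Σ_T φ² dμ). -/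
import Mathlib


open MeasureTheory

/-- Analytic core of the a priori energy estimate (Lemma 3.1, homogeneous case):
if `∫ Σ_T ψ² ≤ ∫ Σ_S φ ψ`, then `‖√Σ_T ψ‖_{L²} ≤ λ ‖√Σ_T φ‖_{L²}`. -/
theorem rsi_apriori_estimate_homogeneous
    {D : Type*} [MeasurableSpace D] (μ : Measure D)
    (SigT SigS ψ φ : D → ℝ) (lam : ℝ)
    (hSigT : Measurable SigT) (hSigS : Measurable SigS)
    (hψ : Measurable ψ) (hφ : Measurable φ)
    (hSigTpos : ∀ᵐ x ∂μ, 0 < SigT x)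
    (hSigSnonneg : ∀ᵐ x ∂μ, 0 ≤ SigS x)
    (hlam : 0 ≤ lam)
    (hSigSle : ∀ᵐ x ∂μ, SigS x ≤ lam * SigT x)
    (hint1 : Integrable (fun x => SigT x * ψ x ^ 2) μ)
    (hint2 : Integrable (fun x => SigT x * φ x ^ 2) μ)
    (hint3 : Integrable (fun x => SigS x * φ x * ψ x) μ)
    (hineq : ∫ x, SigT x * ψ x ^ 2 ∂μ ≤ ∫ x, SigS x * φ x * ψ x ∂μ) :
    Real.sqrt (∫ x, SigT x * ψ x ^ 2 ∂μ) ≤ lam * Real.sqrt (∫ x, SigT x * φ x ^ 2 ∂μ) := by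
  set A := ∫ x, SigT x * ψ x ^ 2 ∂μ with hA
  set B := ∫ x, SigT x * φ x ^ 2 ∂μ with hB
  have hAnn : 0 ≤ A := by
    apply integral_nonneg_of_ae
    filter_upwards [hSigTpos] with x hx
    positivity
  have hBnn : 0 ≤ B := by
    apply integral_nonneg_of_ae
    filter_upwards [hSigTpos] with x hx
    positivity
  -- Key inequality: for all t > 0, 2 t A ≤ lam (t² B + A)
  have key : ∀ t : ℝ, 0 < t → 2 * t * A ≤ lam * (t ^ 2 * B + A) := by
    intro t ht
    have hpt : (∫ x, 2 * t * (SigS x * φ x * ψ x) ∂μ)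
        ≤ ∫ x, lam * (t ^ 2 * (SigT x * φ x ^ 2) + SigT x * ψ x ^ 2) ∂μ := by
      apply integral_mono_ae (hint3.const_mul _)
        (((hint2.const_mul _).add hint1).const_mul _)
      filter_upwards [hSigTpos, hSigSnonneg, hSigSle] with x h1 h2 h3
      simp only [Pi.add_apply]
      nlinarith [mul_nonneg h2 (sq_nonneg (t * φ x - ψ x)),
        mul_nonneg (sub_nonneg.mpr h3)
          (add_nonneg (mul_nonneg (sq_nonneg t) (mul_nonneg h1.le (sq_nonneg (φ x))))
            (mul_nonneg h1.le (sq_nonneg (ψ x))))]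
    rw [integral_const_mul, integral_const_mul, integral_add (hint2.const_mul _) hint1,
      integral_const_mul] at hpt
    have h2t : 0 ≤ 2 * t := by linarith
    calc 2 * t * A ≤ 2 * t * ∫ x, SigS x * φ x * ψ x ∂μ :=
          mul_le_mul_of_nonneg_left hineq h2t
      _ ≤ lam * (t ^ 2 * B + A) := hpt
  -- Reduce to A ≤ lam² B
  have main : A ≤ lam ^ 2 * B := by
    rcases eq_or_lt_of_le hAnn with h | hApos
    · nlinarith
    have hlampos : 0 < lam := by
      rcases eq_or_lt_of_le hlam with h | h
      · exfalso; have := key 1 one_pos; nlinarith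
      · exact h
    have hBpos : 0 < B := by
      rcases eq_or_lt_of_le hBnn with h | h
      · exfalso; have := key lam hlampos; rw [← h] at this; nlinarith [mul_pos hlampos hApos]
      · exact h
    have ht : 0 < Real.sqrt (A / B) := Real.sqrt_pos.mpr (by positivity)
    have hsq : Real.sqrt (A / B) ^ 2 = A / B :=
      Real.sq_sqrt (by positivity)
    have := key _ ht
    rw [hsq] at this
    have hAB : A / B * B = A := div_mul_cancel₀ A (ne_of_gt hBpos)
    rw [hAB] at this
    -- 2 √(A/B) A ≤ 2 lam A  ⇒  √(A/B) ≤ lam  ⇒  A/B ≤ lam²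
    have h1 : Real.sqrt (A / B) ≤ lam := by nlinarith
    have h2 : A / B ≤ lam ^ 2 := by nlinarith
    calc A = A / B * B := hAB.symm
      _ ≤ lam ^ 2 * B := mul_le_mul_of_nonneg_right h2 hBnn
  calc Real.sqrt A ≤ Real.sqrt (lam ^ 2 * B) := Real.sqrt_le_sqrt main
    _ = lam * Real.sqrt B := by
        rw [Real.sqrt_mul (sq_nonneg lam), Real.sqrt_sq hlam]
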